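/- Let α > 1 and x > 0. The Rényi divergence of degree α of a Poisson distribution with parameter x with respect to a Poisson distribution with parameter 1 equals k_α(x) = (x^α − αx + α − 1)/(α(α−1)). Equivalently, (1/(α(α−1)))·log ∑_{n=0}^∞ (x^n e^{−x}/n!)^α · (e^{−1}/n!)^{1−α} = (x^α − αx + α − 1)/(α(α−1)). -/

import Mathlib

open MeasureTheory Classical

/-- The Rényi divergence of degree `α` of `Q` with respect to `P`:
`R_α(Q‖P) = (1/(α(α−1)))·log ∫ (dQ/dP)^α dP` if `Q ≪ P`, and `+∞` otherwise. -/
noncomputable def renyiDiv {S : Type*} [MeasurableSpace S] (α : ℝ)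
    (Q P : Measure S) : EReal :=
  if Q ≪ P then
    (((α * (α - 1))⁻¹ : ℝ) : EReal) * ENNReal.log (∫⁻ x, Q.rnDeriv P x ^ α ∂P)
  else ⊤

/-- The Poisson distribution with parameter `x > 0`, as a measure on `ℕ`
assigning mass `x^n e^{−x}/n!` to `n`. -/
noncomputable def poissonMeasure (x : ℝ) : Measure ℕ :=
  Measure.count.withDensity
    (fun n => ENNReal.ofReal (x ^ n * Real.exp (-x) / n.factorial))

lemma aux_term (α x : ℝ) (hx : 0 < x) (n : ℕ) :
    (x ^ n * Real.exp (-x) / n.factorial) ^ α * (Real.exp (-1) / n.factorial) ^ (1 - α)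
      = Real.exp (-(α * x) + α - 1) * ((x ^ α) ^ n / n.factorial) := by
  have hn : (0:ℝ) < n.factorial := by positivity
  rw [Real.div_rpow (by positivity) hn.le, Real.div_rpow (Real.exp_pos _).le hn.le,
    Real.mul_rpow (by positivity) (Real.exp_pos _).le, div_mul_div_comm,
    ← Real.rpow_add hn, show α + (1 - α) = 1 by ring, Real.rpow_one,
    ← Real.exp_mul, ← Real.exp_mul, ← Real.rpow_natCast x n, ← Real.rpow_mul hx.le,
    mul_comm (n:ℝ) α, Real.rpow_mul hx.le, Real.rpow_natCast]
  have : Real.exp (-x * α) * Real.exp (-1 * (1 - α)) = Real.exp (-(α * x) + α - 1) := by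
    rw [← Real.exp_add]; ring_nf
  rw [mul_assoc, this]; ring

lemma aux_tsum (α x : ℝ) (hx : 0 < x) :
    ∑' n : ℕ, (x ^ n * Real.exp (-x) / n.factorial) ^ α
        * (Real.exp (-1) / n.factorial) ^ (1 - α)
      = Real.exp (x ^ α - α * x + α - 1) := by
  have h : ∑' n : ℕ, (x ^ α) ^ n / n.factorial = Real.exp (x ^ α) := by
    rw [Real.exp_eq_exp_ℝ, NormedSpace.exp_eq_tsum_div]
  calc ∑' n : ℕ, (x ^ n * Real.exp (-x) / n.factorial) ^ α
        * (Real.exp (-1) / n.factorial) ^ (1 - α)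
      = ∑' n : ℕ, Real.exp (-(α * x) + α - 1) * ((x ^ α) ^ n / n.factorial) := by
        exact tsum_congr fun n => aux_term α x hx n
    _ = Real.exp (-(α * x) + α - 1) * Real.exp (x ^ α) := by rw [tsum_mul_left, h]
    _ = Real.exp (x ^ α - α * x + α - 1) := by rw [← Real.exp_add]; ring_nf

lemma aux_summable (α x : ℝ) (hx : 0 < x) :
    Summable (fun n : ℕ => (x ^ n * Real.exp (-x) / n.factorial) ^ α
        * (Real.exp (-1) / n.factorial) ^ (1 - α)) := by
  have := (Real.summable_pow_div_factorial (x ^ α)).mul_left (Real.exp (-(α * x) + α - 1))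
  exact this.congr fun n => (aux_term α x hx n).symm

/-- The Rényi divergence of degree `α > 1` of Poisson(`x`) with respect to Poisson(`1`)
equals `k_α(x) = (x^α − αx + α − 1)/(α(α−1))`; equivalently, the explicit series formula
`(1/(α(α−1)))·log ∑ (x^n e^{−x}/n!)^α (e^{−1}/n!)^{1−α} = (x^α − αx + α − 1)/(α(α−1))`. -/
theorem renyiDiv_poisson (α x : ℝ) (hα : 1 < α) (hx : 0 < x) :
    renyiDiv α (poissonMeasure x) (poissonMeasure 1) =
      (((x ^ α - α * x + α - 1) / (α * (α - 1)) : ℝ) : EReal) ∧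
    (α * (α - 1))⁻¹ * Real.log (∑' n : ℕ,
        (x ^ n * Real.exp (-x) / n.factorial) ^ α
          * (Real.exp (-1) / n.factorial) ^ (1 - α))
      = (x ^ α - α * x + α - 1) / (α * (α - 1)) := by
  have h2 : (α * (α - 1))⁻¹ * Real.log (∑' n : ℕ,
      (x ^ n * Real.exp (-x) / n.factorial) ^ α
        * (Real.exp (-1) / n.factorial) ^ (1 - α))
      = (x ^ α - α * x + α - 1) / (α * (α - 1)) := by
    rw [aux_tsum α x hx, Real.log_exp, inv_mul_eq_div]
  refine ⟨?_, h2⟩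
  -- the measure part
  set fr : ℕ → ℝ := fun n => x ^ n * Real.exp (-x) / n.factorial with hfr
  set gr : ℕ → ℝ := fun n => (1:ℝ) ^ n * Real.exp (-1) / n.factorial with hgr
  have hfrpos : ∀ n, 0 < fr n := fun n => by positivity
  have hgrpos : ∀ n, 0 < gr n := fun n => by positivity
  set f : ℕ → ENNReal := fun n => ENNReal.ofReal (fr n) with hf
  set g : ℕ → ENNReal := fun n => ENNReal.ofReal (gr n) with hg
  have hg0 : ∀ n, g n ≠ 0 := fun n => (ENNReal.ofReal_pos.2 (hgrpos n)).ne'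
  have hgt : ∀ n, g n ≠ ⊤ := fun n => ENNReal.ofReal_ne_top
  set h : ℕ → ENNReal := fun n => f n / g n with hh
  have hQ : poissonMeasure x = (poissonMeasure 1).withDensity h := by
    rw [poissonMeasure, poissonMeasure,
      ← withDensity_mul _ (measurable_of_countable g) (measurable_of_countable h)]
    congr 1
    funext n
    exact (ENNReal.mul_div_cancel (hg0 n) (hgt n)).symm
  have hac : poissonMeasure x ≪ poissonMeasure 1 := by
    rw [hQ]; exact withDensity_absolutelyContinuous _ _
  have hfin : IsFiniteMeasure (poissonMeasure 1) := by
    constructor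
    rw [poissonMeasure, withDensity_apply _ MeasurableSet.univ,
      Measure.restrict_univ, lintegral_count]
    have hsum : Summable gr := by
      have := (Real.summable_pow_div_factorial (1:ℝ)).mul_left (Real.exp (-1))
      exact this.congr fun n => by simp [hgr]; ring
    rw [← ENNReal.ofReal_tsum_of_nonneg (fun n => (hgrpos n).le) hsum]
    exact ENNReal.ofReal_lt_top
  have hrn : (poissonMeasure x).rnDeriv (poissonMeasure 1) =ᵐ[poissonMeasure 1] h := by
    rw [hQ]
    exact Measure.rnDeriv_withDensity _ (measurable_of_countable h)
  have hint : ∫⁻ n, (poissonMeasure x).rnDeriv (poissonMeasure 1) n ^ α ∂(poissonMeasure 1)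
      = ENNReal.ofReal (Real.exp (x ^ α - α * x + α - 1)) := by
    rw [lintegral_congr_ae (hrn.mono fun n hn => by rw [hn])]
    rw [poissonMeasure, lintegral_withDensity_eq_lintegral_mul _
      (measurable_of_countable _) (measurable_of_countable _), lintegral_count]
    have hterm : ∀ n : ℕ, ENNReal.ofReal ((1:ℝ) ^ n * Real.exp (-1) / n.factorial)
        * h n ^ α
        = ENNReal.ofReal (fr n ^ α * gr n ^ (1 - α)) := by
      intro n
      have hdiv : h n = ENNReal.ofReal (fr n / gr n) := by
        rw [hh, hf, hg, ENNReal.ofReal_div_of_pos (hgrpos n)]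
      simp only [hdiv]
      rw [ENNReal.ofReal_rpow_of_pos (div_pos (hfrpos n) (hgrpos n)),
        ← ENNReal.ofReal_mul (hgrpos n).le]
      congr 1
      rw [Real.div_rpow (hfrpos n).le (hgrpos n).le, Real.rpow_sub (hgrpos n),
        Real.rpow_one]
      field_simp
    simp only [Pi.mul_apply]
    rw [tsum_congr hterm]
    have hsum2 : Summable (fun n : ℕ => fr n ^ α * gr n ^ (1 - α)) := by
      have := aux_summable α x hx
      apply this.congr
      intro n
      simp [hfr, hgr]
    rw [← ENNReal.ofReal_tsum_of_nonneg (fun n => by positivity) hsum2]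
    congr 1
    rw [← aux_tsum α x hx]
    exact tsum_congr fun n => by simp [hfr, hgr]
  rw [renyiDiv, if_pos hac, hint, ENNReal.log_ofReal_of_pos (Real.exp_pos _),
    Real.log_exp, ← EReal.coe_mul, inv_mul_eq_div]
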